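/- Let G be a group and N a subgroup of G contained in the center of G such that N is isomorphic to ℤ and the quotient group G/N is a free group. Then G is isomorphic to the direct product N × (G/N). -/

import Mathlib

universe u

/-- A central extension of a free group by `ℤ` splits as a direct product. -/
theorem stmt_11 (G : Type u) [Group G] (N : Subgroup G) [N.Normal]
    (hcentral : N ≤ Subgroup.center G)
    (hZ : Nonempty (N ≃* Multiplicative ℤ))
    (hfree : ∃ S : Type u, Nonempty ((G ⧸ N) ≃* FreeGroup S)) :
    Nonempty (G ≃* N × (G ⧸ N)) := by
  obtain ⟨S, ⟨e⟩⟩ := hfree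
  set π : G →* G ⧸ N := QuotientGroup.mk' N with hπ
  have hπsurj : Function.Surjective π := QuotientGroup.mk'_surjective N
  choose lift hlift using fun s : S => hπsurj (e.symm (FreeGroup.of s))
  set φ : FreeGroup S →* G := FreeGroup.lift lift with hφdef
  have key : π.comp φ = e.symm.toMonoidHom := by
    apply FreeGroup.ext_hom
    intro s
    simp [φ, hlift s]
  set σ : (G ⧸ N) →* G := φ.comp e.toMonoidHom with hσdef
  have hσ : ∀ q, π (σ q) = q := by
    intro q
    have := DFunLike.congr_fun key (e q)
    simpa [σ] using this
  have hmem : ∀ g : G, g * (σ (π g))⁻¹ ∈ N := by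
    intro g
    have : π (g * (σ (π g))⁻¹) = 1 := by
      rw [map_mul, map_inv, hσ, mul_inv_cancel]
    rwa [hπ, QuotientGroup.mk'_apply, QuotientGroup.eq_one_iff] at this
  let f : G → N × (G ⧸ N) := fun g => (⟨g * (σ (π g))⁻¹, hmem g⟩, π g)
  refine ⟨{ toFun := f
            invFun := fun p => (p.1 : G) * σ p.2
            left_inv := ?_
            right_inv := ?_
            map_mul' := ?_ }⟩
  · intro g
    simp [f, mul_assoc]
  · rintro ⟨n, q⟩
    have hn : π (n : G) = 1 := by
      rw [hπ, QuotientGroup.mk'_apply, QuotientGroup.eq_one_iff]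
      exact n.2
    have hq : π ((n : G) * σ q) = q := by rw [map_mul, hn, hσ, one_mul]
    refine Prod.ext (Subtype.ext ?_) hq
    simp [f, hq, mul_assoc]
  · intro g h
    have hc : ∀ a : G, a * (h * (σ (π h))⁻¹) = (h * (σ (π h))⁻¹) * a := by
      intro a
      exact Subgroup.mem_center_iff.mp (hcentral (hmem h)) a
    refine Prod.ext (Subtype.ext ?_) (map_mul π g h)
    show g * h * (σ (π (g * h)))⁻¹ = (g * (σ (π g))⁻¹) * (h * (σ (π h))⁻¹)
    calc g * h * (σ (π (g * h)))⁻¹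
        = g * ((h * (σ (π h))⁻¹) * (σ (π g))⁻¹) := by
          rw [map_mul, map_mul, mul_inv_rev]; group
      _ = g * ((σ (π g))⁻¹ * (h * (σ (π h))⁻¹)) := by rw [hc]
      _ = (g * (σ (π g))⁻¹) * (h * (σ (π h))⁻¹) := by group
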